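/- Let a ∈ (0, √2) and for m ∈ ℕ set κ_{2m}(a) = (2a²/π)·∫_{−1}^{1} λ^{2m}·√(1 − λ²)/(a⁴ − 4(a² − 1)λ²) dλ. Then √π·m^{3/2}·κ_{2m}(a) → a²/(a² − 2)² as m → ∞. -/

import Mathlib

open Real Filter Finset intervalIntegral


noncomputable def Pp (m : ℕ) : ℝ := ∏ i ∈ Finset.range m, (2 * (i:ℝ) + 1) / (2 * i + 2)

lemma J_eval (k : ℕ) : (∫ x in (-(π/2))..(π/2), sin x ^ (2*k)) = π * Pp k := by
  have h1 : (∫ x in (-(π/2))..(0:ℝ), sin x ^ (2*k)) = ∫ x in (0:ℝ)..(π/2), sin x ^ (2*k) := by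
    have := intervalIntegral.integral_comp_neg (a := (0:ℝ)) (b := π/2) (fun x => sin x ^ (2*k))
    simp only [neg_zero] at this
    rw [← this]
    congr 1; ext x
    rw [Real.sin_neg, pow_mul, pow_mul, neg_sq]
  have h2 : (∫ x in (π/2)..π, sin x ^ (2*k)) = ∫ x in (0:ℝ)..(π/2), sin x ^ (2*k) := by
    have := intervalIntegral.integral_comp_sub_left (a := (π/2)) (b := π) (fun x => sin x ^ (2*k)) π
    simp only [sub_self, sub_half] at this
    rw [← this]
    congr 1; ext x
    rw [Real.sin_pi_sub]
  have hint : ∀ u v : ℝ, IntervalIntegrable (fun x => sin x ^ (2*k)) MeasureTheory.volume u v :=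
    fun u v => (continuous_sin.pow _).intervalIntegrable u v
  have hsplit1 : (∫ x in (-(π/2))..(π/2), sin x ^ (2*k)) =
      (∫ x in (-(π/2))..(0:ℝ), sin x ^ (2*k)) + ∫ x in (0:ℝ)..(π/2), sin x ^ (2*k) :=
    (intervalIntegral.integral_add_adjacent_intervals (hint _ _) (hint _ _)).symm
  have hsplit2 : (∫ x in (0:ℝ)..π, sin x ^ (2*k)) =
      (∫ x in (0:ℝ)..(π/2), sin x ^ (2*k)) + ∫ x in (π/2)..π, sin x ^ (2*k) :=
    (intervalIntegral.integral_add_adjacent_intervals (hint _ _) (hint _ _)).symm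
  rw [hsplit1, h1]
  nth_rewrite 2 [← h2]
  rw [← hsplit2, integral_sin_pow_even]
  rfl

lemma I_eval (m : ℕ) :
    (∫ x in (-1:ℝ)..1, x ^ (2*m) * Real.sqrt (1 - x^2)) = π * Pp m / (2*m+2) := by
  have h0 : (∫ x in (-1:ℝ)..1, x ^ (2*m) * Real.sqrt (1 - x^2))
      = ∫ x in (-(π/2))..(π/2), sin x ^ (2*m) * cos x ^ 2 := by
    calc (∫ x in (-1:ℝ)..1, x ^ (2*m) * Real.sqrt (1 - x^2))
        = ∫ x in sin (-(π/2)).. sin (π/2), x ^ (2*m) * Real.sqrt (1 - x^2) := by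
          rw [Real.sin_neg, Real.sin_pi_div_two]
      _ = ∫ x in (-(π/2))..(π/2), (sin x ^ (2*m) * Real.sqrt (1 - sin x ^ 2)) * cos x :=
          (integral_comp_mul_deriv (fun x _ => Real.hasDerivAt_sin x) continuousOn_cos
            (by fun_prop)).symm
      _ = ∫ x in (-(π/2))..(π/2), sin x ^ (2*m) * cos x ^ 2 := by
          refine intervalIntegral.integral_congr fun x hx => ?_
          rw [Set.uIcc_of_le (by linarith [Real.pi_pos] : -(π/2) ≤ π/2)] at hx
          have hc : 0 ≤ cos x := Real.cos_nonneg_of_mem_Icc hx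
          rw [← Real.cos_eq_sqrt_one_sub_sin_sq (by linarith [hx.1]) hx.2]
          ring
  have h1 : (∫ x in (-(π/2))..(π/2), sin x ^ (2*m) * cos x ^ 2)
      = (∫ x in (-(π/2))..(π/2), sin x ^ (2*m)) - ∫ x in (-(π/2))..(π/2), sin x ^ (2*(m+1)) := by
    rw [← intervalIntegral.integral_sub (f := fun x => sin x ^ (2*m)) (g := fun x => sin x ^ (2*(m+1)))
        ((continuous_sin.pow _).intervalIntegrable _ _)
        ((continuous_sin.pow _).intervalIntegrable _ _)]
    refine intervalIntegral.integral_congr fun x hx => ?_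
    rw [Real.cos_sq', show 2*(m+1) = 2*m+2 from rfl, pow_add]
    ring
  rw [h0, h1, J_eval, J_eval]
  have : Pp (m+1) = Pp m * ((2*m+1)/(2*m+2)) := Finset.prod_range_succ _ m
  rw [this]
  have h2 : (2*(m:ℝ)+2) ≠ 0 := by positivity
  field_simp
  ring

lemma Pp_eq (m : ℕ) : Pp m = (Nat.factorial (2*m) : ℝ) / (4^m * (Nat.factorial m : ℝ)^2) := by
  induction m with
  | zero => simp [Pp]
  | succ k ih =>
    rw [Pp, Finset.prod_range_succ, ← Pp, ih]
    have h1 : ((Nat.factorial k : ℝ)) ≠ 0 := Nat.cast_ne_zero.mpr (Nat.factorial_ne_zero k)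
    have h2 : ((Nat.factorial (k+1) : ℝ)) ≠ 0 := Nat.cast_ne_zero.mpr (Nat.factorial_ne_zero _)
    have h3 : (2*(k:ℝ)+2) ≠ 0 := by positivity
    have h4 : ((4:ℝ)^k) ≠ 0 := by positivity
    have e1 : 2*(k+1) = 2*k+1+1 := by ring
    rw [e1, Nat.factorial_succ, Nat.factorial_succ, Nat.factorial_succ]
    push_cast
    field_simp
    ring

lemma Pp_stirling (m : ℕ) (hm : 1 ≤ m) :
    Pp m * Real.sqrt m = Stirling.stirlingSeq (2*m) / (Stirling.stirlingSeq m)^2 := by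
  have hm0 : (0:ℝ) < m := by exact_mod_cast hm
  have hs : (0:ℝ) < Real.sqrt m := Real.sqrt_pos.mpr hm0
  have hss : Real.sqrt (m:ℝ) * Real.sqrt (m:ℝ) = m := Real.mul_self_sqrt hm0.le
  have he : (0:ℝ) < Real.exp 1 := Real.exp_pos 1
  rw [Pp_eq, Stirling.stirlingSeq, Stirling.stirlingSeq]
  have h2m : ((2*m : ℕ) : ℝ) = 2*(m:ℝ) := by push_cast; ring
  rw [h2m]
  have hsqrt4 : Real.sqrt (2*(2*(m:ℝ))) = 2 * Real.sqrt m := by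
    rw [show 2*(2*(m:ℝ)) = 4 * m by ring, show (4:ℝ) = 2^2 by norm_num,
      Real.sqrt_mul (by positivity), Real.sqrt_sq (by norm_num)]
  have hsqrt2m : Real.sqrt (2*(m:ℝ)) ^ 2 = 2 * m := Real.sq_sqrt (by positivity)
  have hpow : (2*(m:ℝ) / Real.exp 1) ^ (2*m) = 4^m * ((m:ℝ)/Real.exp 1)^(2*m) := by
    rw [show 2*(m:ℝ)/Real.exp 1 = 2 * ((m:ℝ)/Real.exp 1) by ring, mul_pow, pow_mul]
    norm_num
  have hpp : ((m:ℝ)/Real.exp 1) ^ m ≠ 0 := by positivity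
  have hpp2 : ((m:ℝ)/Real.exp 1) ^ (2*m) ≠ 0 := by positivity
  have hf1 : ((Nat.factorial m : ℝ)) ≠ 0 := Nat.cast_ne_zero.mpr (Nat.factorial_ne_zero m)
  have key : ((Nat.factorial m : ℝ) / (Real.sqrt (2*(m:ℝ)) * ((m:ℝ)/Real.exp 1)^m))^2
      = (Nat.factorial m : ℝ)^2 / (2*(m:ℝ) * ((m:ℝ)/Real.exp 1)^(2*m)) := by
    rw [div_pow, mul_pow, hsqrt2m, ← pow_mul, Nat.mul_comm m 2]
  rw [hsqrt4, hpow, key]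
  field_simp
  linear_combination hss

lemma sqrtpi_pos : 0 < Real.sqrt π := Real.sqrt_pos.mpr Real.pi_pos

lemma tendsto_Pp : Tendsto (fun m : ℕ => Pp m * Real.sqrt m) atTop (nhds (Real.sqrt π)⁻¹) := by
  have h2 : Tendsto (fun m : ℕ => 2*m) atTop atTop :=
    StrictMono.tendsto_atTop (fun i j hij => by omega)
  have hs : Tendsto (fun m : ℕ => Stirling.stirlingSeq (2*m) / (Stirling.stirlingSeq m)^2)
      atTop (nhds (Real.sqrt π / (Real.sqrt π)^2)) :=
    (Stirling.tendsto_stirlingSeq_sqrt_pi.comp h2).div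
      (Stirling.tendsto_stirlingSeq_sqrt_pi.pow 2) (by positivity)
  have heq : Real.sqrt π / (Real.sqrt π)^2 = (Real.sqrt π)⁻¹ := by
    rw [sq, div_mul_cancel_left₀ sqrtpi_pos.ne']
  rw [heq] at hs
  refine hs.congr' ?_
  filter_upwards [eventually_ge_atTop 1] with m hm
  exact (Pp_stirling m hm).symm

lemma tendsto_I : Tendsto (fun m : ℕ =>
    (m:ℝ) * Real.sqrt m * ∫ x in (-1:ℝ)..1, x ^ (2*m) * Real.sqrt (1 - x^2))
    atTop (nhds (Real.sqrt π / 2)) := by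
  have hhalf : Tendsto (fun m : ℕ => (m:ℝ)/(2*m+2)) atTop (nhds (1/2)) := by
    have hden : Tendsto (fun m : ℕ => 2*(m:ℝ)+2) atTop atTop :=
      tendsto_atTop_add_const_right _ 2
        ((tendsto_natCast_atTop_atTop (R := ℝ)).const_mul_atTop (by norm_num))
    have h0 : Tendsto (fun m : ℕ => (2*(m:ℝ)+2)⁻¹) atTop (nhds 0) :=
      tendsto_inv_atTop_zero.comp hden
    have := (tendsto_const_nhds (x := (1:ℝ)/2) (f := atTop (α := ℕ))).sub h0
    rw [sub_zero] at this
    refine this.congr fun m => ?_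
    have hne : (2*(m:ℝ)+2) ≠ 0 := by positivity
    field_simp
    ring
  have := (tendsto_Pp.mul hhalf).const_mul π
  have heq : π * ((Real.sqrt π)⁻¹ * (1/2)) = Real.sqrt π / 2 := by
    have h2 : Real.sqrt π ^ 2 = π := Real.sq_sqrt Real.pi_pos.le
    field_simp
    linarith [h2]
  rw [heq] at this
  refine this.congr fun m => ?_
  rw [I_eval]
  have hne : (2*(m:ℝ)+2) ≠ 0 := by positivity
  field_simp

lemma sqrt_nat_atTop : Tendsto (fun m : ℕ => Real.sqrt m) atTop atTop := by
  have := (tendsto_rpow_atTop (by norm_num : (0:ℝ) < 1/2)).comp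
    (tendsto_natCast_atTop_atTop (R := ℝ))
  refine this.congr fun m => ?_
  simp [Function.comp, Real.sqrt_eq_rpow]

/-- Asymptotics of the even moments of the spectral measure of `H_a` for
`a ∈ (0, √2)`: `√π·m^{3/2}·κ_{2m}(a) → a²/(a² − 2)²` as `m → ∞`. -/
theorem stmt16 (a : ℝ) (ha : a ∈ Set.Ioo 0 (Real.sqrt 2)) :
    Filter.Tendsto
      (fun m : ℕ =>
        Real.sqrt Real.pi * (m : ℝ) ^ ((3 : ℝ) / 2) *
          (2 * a ^ 2 / Real.pi *
            ∫ x in (-1 : ℝ)..1,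
              x ^ (2 * m) * Real.sqrt (1 - x ^ 2) /
                (a ^ 4 - 4 * (a ^ 2 - 1) * x ^ 2)))
      Filter.atTop (nhds (a ^ 2 / (a ^ 2 - 2) ^ 2)) := by
  obtain ⟨ha0, has⟩ := ha
  have ha2 : a^2 < 2 := by
    nlinarith [Real.mul_self_sqrt (by norm_num : (0:ℝ) ≤ 2), Real.sqrt_nonneg 2]
  set c : ℝ := (a^2 - 2)^2 with hc_def
  have hc : 0 < c := by
    have : a^2 - 2 ≠ 0 := by nlinarith
    positivity
  set δ : ℝ := min (a^4) c with hδ_def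
  have hδ : 0 < δ := lt_min (by positivity) hc
  -- denominator bound
  have hDlb : ∀ x : ℝ, x^2 ≤ 1 → δ ≤ a^4 - 4*(a^2-1)*x^2 := by
    intro x hx2
    rcases le_or_gt (a^2) 1 with h | h
    · have h1 : δ ≤ a^4 := min_le_left _ _
      nlinarith [sq_nonneg x]
    · have h1 : δ ≤ c := min_le_right _ _
      rw [hc_def] at h1
      nlinarith [sq_nonneg x]
  have hD0 : ∀ x : ℝ, x^2 ≤ 1 → 0 < a^4 - 4*(a^2-1)*x^2 := fun x hx =>
    lt_of_lt_of_le hδ (hDlb x hx)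
  set K : ℝ := 4*|a^2-1| / (δ * c) with hK_def
  have hK0 : 0 ≤ K := by positivity
  -- integrability pieces
  have hx2mem : ∀ x ∈ Set.uIcc (-1:ℝ) 1, x^2 ≤ 1 := by
    intro x hx
    rw [Set.uIcc_of_le (by norm_num : (-1:ℝ) ≤ 1)] at hx
    nlinarith [hx.1, hx.2]
  have hnumcont : ∀ m : ℕ, Continuous fun x : ℝ => x ^ (2*m) * Real.sqrt (1 - x^2) := by
    intro m; fun_prop
  have hDcont : Continuous fun x : ℝ => a^4 - 4*(a^2-1)*x^2 := by fun_prop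
  have hint1 : ∀ m : ℕ, IntervalIntegrable
      (fun x : ℝ => x ^ (2*m) * Real.sqrt (1 - x^2) / (a^4 - 4*(a^2-1)*x^2))
      MeasureTheory.volume (-1) 1 := by
    intro m
    apply ContinuousOn.intervalIntegrable
    exact ((hnumcont m).continuousOn).div hDcont.continuousOn
      (fun x hx => (hD0 x (hx2mem x hx)).ne')
  have hint2 : ∀ m : ℕ, IntervalIntegrable
      (fun x : ℝ => x ^ (2*m) * Real.sqrt (1 - x^2) * ((a^4 - 4*(a^2-1)*x^2)⁻¹ - c⁻¹))
      MeasureTheory.volume (-1) 1 := by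
    intro m
    apply ContinuousOn.intervalIntegrable
    exact ((hnumcont m).continuousOn).mul
      (((hDcont.continuousOn).inv₀ fun x hx => (hD0 x (hx2mem x hx)).ne').sub continuousOn_const)
  -- decomposition of the integral
  have hdecomp : ∀ m : ℕ,
      (∫ x in (-1:ℝ)..1, x ^ (2*m) * Real.sqrt (1 - x^2) / (a^4 - 4*(a^2-1)*x^2))
      = (∫ x in (-1:ℝ)..1, x ^ (2*m) * Real.sqrt (1 - x^2)) / c
        + ∫ x in (-1:ℝ)..1, x ^ (2*m) * Real.sqrt (1 - x^2) * ((a^4 - 4*(a^2-1)*x^2)⁻¹ - c⁻¹) := by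
    intro m
    rw [← intervalIntegral.integral_div, ← intervalIntegral.integral_add
      ((((hnumcont m).div_const c).intervalIntegrable _ _)) (hint2 m)]
    refine intervalIntegral.integral_congr fun x hx => ?_
    rw [div_eq_mul_inv, div_eq_mul_inv]
    ring
  -- error bound
  set E : ℕ → ℝ := fun m =>
    ∫ x in (-1:ℝ)..1, x ^ (2*m) * Real.sqrt (1 - x^2) * ((a^4 - 4*(a^2-1)*x^2)⁻¹ - c⁻¹)
    with hE_def
  have hEbound : ∀ m : ℕ, |E m| ≤ K * ∫ x in (-1:ℝ)..1, x ^ (2*m) * (1 - x^2) := by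
    intro m
    have habs := intervalIntegral.abs_integral_le_integral_abs (μ := MeasureTheory.volume)
      (f := fun x : ℝ => x ^ (2*m) * Real.sqrt (1 - x^2) * ((a^4 - 4*(a^2-1)*x^2)⁻¹ - c⁻¹))
      (by norm_num : (-1:ℝ) ≤ 1)
    refine habs.trans ?_
    rw [← intervalIntegral.integral_const_mul]
    apply intervalIntegral.integral_mono_on (by norm_num : (-1:ℝ) ≤ 1)
    · exact (hint2 m).abs
    · apply ContinuousOn.intervalIntegrable
      exact (continuous_const.mul ((continuous_pow _).mul
        (continuous_const.sub (continuous_pow 2)))).continuousOn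
    · intro x hx
      have hx1 : x^2 ≤ 1 := by nlinarith [hx.1, hx.2]
      have hx1' : 0 ≤ 1 - x^2 := by linarith
      have hxp : (0:ℝ) ≤ x ^ (2*m) := Even.pow_nonneg (even_two_mul m) x
      set D : ℝ := a^4 - 4*(a^2-1)*x^2 with hD_def
      have hDb : δ ≤ D := hDlb x hx1
      have hDpos : 0 < D := hD0 x hx1
      have hsq1 : Real.sqrt (1 - x^2) ≤ 1 := by
        calc Real.sqrt (1 - x^2) ≤ Real.sqrt 1 := Real.sqrt_le_sqrt (by linarith [sq_nonneg x])
          _ = 1 := Real.sqrt_one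
      have hinv : D⁻¹ - c⁻¹ = (c - D) / (D * c) := by
        field_simp
      have hcd : c - D = -(4*(a^2-1)) * (1 - x^2) := by
        rw [hc_def, hD_def]; ring
      rw [abs_mul, hinv, abs_div, hcd]
      have h1 : |x ^ (2*m) * Real.sqrt (1 - x^2)| ≤ x ^ (2*m) := by
        rw [abs_of_nonneg (by positivity)]
        calc x ^ (2*m) * Real.sqrt (1 - x^2) ≤ x ^ (2*m) * 1 :=
          mul_le_mul_of_nonneg_left hsq1 hxp
        _ = x ^ (2*m) := mul_one _
      have h2 : |(-(4*(a^2-1)) * (1 - x^2))| / |D * c| ≤ 4*|a^2-1| * (1-x^2) / (δ*c) := by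
        rw [abs_mul, abs_mul, abs_neg, abs_of_nonneg hx1', abs_of_pos hDpos, abs_of_pos hc,
          show |4*(a^2-1)| = 4*|a^2-1| by rw [abs_mul]; norm_num]
        gcongr <;> first
          | positivity
          | exact mul_pos hδ hc
          | exact mul_le_mul_of_nonneg_right hDb hc.le
      calc |x ^ (2*m) * Real.sqrt (1 - x^2)| * (|(-(4*(a^2-1)) * (1 - x^2))| / |D * c|)
          ≤ x ^ (2*m) * (4*|a^2-1| * (1-x^2) / (δ*c)) :=
            mul_le_mul h1 h2 (by positivity) hxp
        _ = K * (x ^ (2*m) * (1 - x^2)) := by rw [hK_def]; ring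
  -- value of the polynomial integral
  have hIpow : ∀ m : ℕ, (∫ x in (-1:ℝ)..1, x ^ (2*m) * (1 - x^2))
      = 2/(2*(m:ℝ)+1) - 2/(2*(m:ℝ)+3) := by
    intro m
    have e : ∀ x : ℝ, x ^ (2*m) * (1-x^2) = x^(2*m) - x^(2*m+2) := fun x => by ring
    simp_rw [e]
    rw [intervalIntegral.integral_sub ((continuous_pow _).intervalIntegrable _ _)
      ((continuous_pow _).intervalIntegrable _ _), integral_pow, integral_pow]
    have h1 : (-1:ℝ)^(2*m+1) = -1 := Odd.neg_one_pow ⟨m, by ring⟩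
    have h2 : (-1:ℝ)^(2*m+2+1) = -1 := Odd.neg_one_pow ⟨m+1, by ring⟩
    rw [one_pow, one_pow, h1, h2]
    push_cast
    ring
  -- the error term tends to zero (after scaling by m^{3/2})
  have hE0 : Tendsto (fun m : ℕ => (m:ℝ) * Real.sqrt m * E m) atTop (nhds 0) := by
    apply squeeze_zero_norm' (a := fun m : ℕ => K / Real.sqrt m)
    · filter_upwards [eventually_ge_atTop 1] with m hm
      have hm0 : (0:ℝ) < m := by exact_mod_cast hm
      have hsm : 0 < Real.sqrt (m:ℝ) := Real.sqrt_pos.mpr hm0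
      have hss : Real.sqrt (m:ℝ) * Real.sqrt (m:ℝ) = m := Real.mul_self_sqrt hm0.le
      rw [Real.norm_eq_abs, abs_mul,
        abs_of_nonneg (by positivity : (0:ℝ) ≤ (m:ℝ)*Real.sqrt (m:ℝ))]
      have hb := hEbound m
      rw [hIpow m] at hb
      have hpos1 : (0:ℝ) < 2*(m:ℝ)+1 := by positivity
      have hpos3 : (0:ℝ) < 2*(m:ℝ)+3 := by positivity
      have key : (2/(2*(m:ℝ)+1) - 2/(2*(m:ℝ)+3)) = 4/((2*(m:ℝ)+1)*(2*(m:ℝ)+3)) := by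
        rw [div_sub_div _ _ hpos1.ne' hpos3.ne']
        congr 1
        ring
      rw [key, ← mul_div_assoc] at hb
      calc (m:ℝ)*Real.sqrt (m:ℝ) * |E m|
          ≤ (m:ℝ)*Real.sqrt (m:ℝ) * (K*4/((2*(m:ℝ)+1)*(2*(m:ℝ)+3))) :=
            mul_le_mul_of_nonneg_left hb (by positivity)
        _ ≤ K / Real.sqrt (m:ℝ) := by
            rw [mul_div_assoc', div_le_div_iff₀ (by positivity) hsm]
            have h5 : (m:ℝ)*Real.sqrt (m:ℝ)*(K*4)*Real.sqrt (m:ℝ)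
                = K*4*((m:ℝ)*(Real.sqrt (m:ℝ)*Real.sqrt (m:ℝ))) := by ring
            rw [h5, hss]
            nlinarith [mul_nonneg hK0 (show (0:ℝ) ≤ 8*(m:ℝ)+3 by positivity)]
    · exact Tendsto.div_atTop tendsto_const_nhds sqrt_nat_atTop
  -- assemble
  have hππ : Real.sqrt π * Real.sqrt π = π := Real.mul_self_sqrt Real.pi_pos.le
  have t1 := tendsto_I.const_mul (Real.sqrt π * (2*a^2) / (π * c))
  have t2 := hE0.const_mul (Real.sqrt π * (2*a^2) / π)
  have hcst : Real.sqrt π * (2*a^2) / (π*c) * (Real.sqrt π/2) = a^2/c := by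
    rw [div_mul_div_comm,
      show Real.sqrt π * (2*a^2) * Real.sqrt π = (Real.sqrt π*Real.sqrt π) * (2*a^2) by ring, hππ]
    rw [div_eq_div_iff (by positivity) hc.ne']
    ring
  have final := t1.add t2
  rw [mul_zero, add_zero, hcst] at final
  have hdecomp' : ∀ m : ℕ,
      (∫ x in (-1:ℝ)..1, x ^ (2*m) * Real.sqrt (1 - x^2) / (a^4 - 4*(a^2-1)*x^2))
      = (∫ x in (-1:ℝ)..1, x ^ (2*m) * Real.sqrt (1 - x^2)) / c + E m := hdecomp
  clear_value K δ E c
  refine final.congr' ?_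
  filter_upwards [eventually_ge_atTop 1] with m hm
  have hm0 : (0:ℝ) < m := by exact_mod_cast hm
  have hrpow : (m:ℝ)^((3:ℝ)/2) = (m:ℝ) * Real.sqrt (m:ℝ) := by
    rw [Real.sqrt_eq_rpow, show (3:ℝ)/2 = 1 + 1/2 by norm_num, Real.rpow_add hm0, Real.rpow_one]
  rw [hdecomp' m, hrpow]
  have hπ0 : (π:ℝ) ≠ 0 := Real.pi_pos.ne'
  field_simp
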